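/- Let φ: [0,∞) → [0,∞) be a continuous non-decreasing function with φ(x) > 0 for all x > 0, φ(x) ≤ a·x + b for given non-negative constants a, b, and ∫₀₊ dx/φ(x) = +∞. Then for any γ ≥ 0 and ε ≥ 0, the backward differential equation u(t) = γ + ∫ₜ¹ (φ(u(s)) + ε) ds for 0 ≤ t ≤ 1 has a unique continuous solution u^{γ,ε} on [0,1]. -/

import Mathlib

open MeasureTheory Set

/-- A continuous nonnegative solution on `[0,1]` of the backward integral equation
`u t = γ + ∫ₜ¹ (φ (u s) + ε) ds`. -/
def IsSolODE (φ : ℝ → ℝ) (ε γ : ℝ) (u : ℝ → ℝ) : Prop :=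
  ContinuousOn u (Set.Icc 0 1) ∧ (∀ t ∈ Set.Icc (0:ℝ) 1, 0 ≤ u t) ∧
    ∀ t ∈ Set.Icc (0:ℝ) 1, u t = γ + ∫ s in Set.Ioc t 1, (φ (u s) + ε)

/-- The Osgood condition `∫₀₊ dx / φ x = +∞`. -/
def OsgoodCondition (φ : ℝ → ℝ) : Prop :=
  ∀ δ > (0:ℝ), ∫⁻ x in Set.Ioc (0:ℝ) δ, ENNReal.ofReal (1 / φ x) = ⊤

open Filter in
private lemma caseB (φ : ℝ → ℝ) (a b : ℝ) (ha : 0 ≤ a)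
    (hφc : ContinuousOn φ (Set.Ici 0)) (hφm : MonotoneOn φ (Set.Ici 0))
    (hφnn : ∀ x ≥ (0:ℝ), 0 ≤ φ x)
    (hφgrow : ∀ x ≥ (0:ℝ), φ x ≤ a * x + b)
    (γ ε : ℝ) (hγ : 0 ≤ γ) (hε : 0 ≤ ε) (hc₀ : 0 < φ γ + ε) :
    ∃ u : ℝ → ℝ, IsSolODE φ ε γ u ∧
      ∀ v : ℝ → ℝ, IsSolODE φ ε γ v → Set.EqOn v u (Set.Icc 0 1) := by
  classical
  -- the truncated nonlinearity
  set ψ : ℝ → ℝ := fun x => φ (max x 0) + ε with hψdef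
  have hψc : Continuous ψ := by
    have h1 : Continuous fun x : ℝ => φ (max x 0) :=
      hφc.comp_continuous (continuous_id.max continuous_const) fun x =>
        mem_Ici.2 (le_max_right x 0)
    exact h1.add continuous_const
  have hψm : Monotone ψ := by
    intro x y hxy
    have h1 := hφm (mem_Ici.2 (le_max_right x 0)) (mem_Ici.2 (le_max_right y 0))
      (max_le_max hxy le_rfl)
    simpa [hψdef] using add_le_add_right h1 ε
  have hψeq : ∀ x, 0 ≤ x → ψ x = φ x + ε := fun x hx => by
    simp [hψdef, max_eq_left hx]
  have hψγ : ψ γ = φ γ + ε := hψeq γ hγ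
  have hψ_lb : ∀ x, γ ≤ x → φ γ + ε ≤ ψ x := fun x hx => hψγ ▸ hψm hx
  have hψpos : ∀ x, γ ≤ x → 0 < ψ x := fun x hx => lt_of_lt_of_le hc₀ (hψ_lb x hx)
  -- the reciprocal
  set ρ : ℝ → ℝ := fun x => (ψ (max x γ))⁻¹ with hρdef
  have hρ_eq : ∀ x, γ ≤ x → ρ x = (ψ x)⁻¹ := fun x hx => by
    simp [hρdef, max_eq_left hx]
  have hρpos : ∀ x, 0 < ρ x := fun x => inv_pos.2 (hψpos _ (le_max_right x γ))
  have hρcont : Continuous ρ :=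
    (hψc.comp (continuous_id.max continuous_const)).inv₀ fun x =>
      ne_of_gt (hψpos _ (le_max_right x γ))
  -- the primitive F
  set F : ℝ → ℝ := fun y => ∫ x in γ..y, ρ x with hFdef
  have hFd : ∀ y, HasDerivAt F (ρ y) y := fun y =>
    (hρcont.integral_hasStrictDerivAt γ y).hasDerivAt
  have hFdiff : Differentiable ℝ F := fun y => (hFd y).differentiableAt
  have hFc : Continuous F := hFdiff.continuous
  have hFsm : StrictMono F := strictMono_of_deriv_pos fun y => by
    rw [(hFd y).deriv]; exact hρpos y
  have hF0 : F γ = 0 := intervalIntegral.integral_same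
  have hFlin : ∀ y, y ≤ γ → F y = (y - γ) * (φ γ + ε)⁻¹ := by
    intro y hy
    have h1 : EqOn ρ (fun _ => (φ γ + ε)⁻¹) (uIcc γ y) := by
      intro x hx
      rw [uIcc_of_ge hy] at hx
      simp [hρdef, max_eq_right hx.2, hψγ]
    calc F y = ∫ x in γ..y, (fun _ : ℝ => (φ γ + ε)⁻¹) x :=
          intervalIntegral.integral_congr h1
      _ = (y - γ) * (φ γ + ε)⁻¹ := by
          simp only [intervalIntegral.integral_const, smul_eq_mul]
  have hFbot : Tendsto F atBot atBot := by
    have h0 : Tendsto (fun y : ℝ => y - γ) atBot atBot := by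
      simpa [sub_eq_add_neg] using
        tendsto_atBot_add_const_right atBot (-γ) (tendsto_id (α := ℝ))
    have h1 : Tendsto (fun y : ℝ => (y - γ) * (φ γ + ε)⁻¹) atBot atBot :=
      h0.atBot_mul_const (inv_pos.2 hc₀)
    refine h1.congr' ?_
    filter_upwards [eventually_le_atBot γ] with y hy
    exact (hFlin y hy).symm
  -- comparison with the affine bound
  have hβγ : φ γ + ε ≤ a * γ + (b + ε) := by
    have := hφgrow γ hγ; linarith
  have haff_pos : ∀ x, γ ≤ x → 0 < a * x + (b + ε) := by
    intro x hx
    have h1 : a * γ ≤ a * x := mul_le_mul_of_nonneg_left hx ha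
    linarith
  have haffint : ∀ y, γ ≤ y →
      IntervalIntegrable (fun x => (a * x + (b + ε))⁻¹) volume γ y := by
    intro y hy
    refine ContinuousOn.intervalIntegrable ?_
    rw [uIcc_of_le hy]
    exact (((continuous_const.mul continuous_id).add continuous_const).continuousOn).inv₀
      fun x hx => ne_of_gt (haff_pos x hx.1)
  have hcomp : ∀ y, γ ≤ y → (∫ x in γ..y, (a * x + (b + ε))⁻¹) ≤ F y := by
    intro y hy
    refine intervalIntegral.integral_mono_on hy (haffint y hy)
      (hρcont.intervalIntegrable γ y) ?_
    intro x hx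
    have hx0 : (0:ℝ) ≤ x := le_trans hγ hx.1
    rw [hρ_eq x hx.1, hψeq x hx0]
    have h1 : 0 < φ x + ε := by
      have h2 := hψ_lb x hx.1
      rw [hψeq x hx0] at h2
      linarith
    have h2 : φ x + ε ≤ a * x + (b + ε) := by
      have := hφgrow x hx0; linarith
    exact inv_anti₀ h1 h2
  have hunbdd : ∀ M : ℝ, ∃ y, M ≤ F y := by
    intro M
    have hM'pos : (0:ℝ) < max M 1 := lt_of_lt_of_le one_pos (le_max_right M 1)
    have hMM' : M ≤ max M 1 := le_max_left M 1
    rcases eq_or_lt_of_le ha with haz | hapos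
    · -- a = 0
      have hβpos : 0 < b + ε := by
        have h1 := hβγ; rw [← haz] at h1; simp at h1; linarith
      refine ⟨γ + max M 1 * (b + ε), ?_⟩
      have hy : γ ≤ γ + max M 1 * (b + ε) := by nlinarith
      refine le_trans ?_ (hcomp _ hy)
      have h2 : (∫ x in γ..(γ + max M 1 * (b + ε)), (a * x + (b + ε))⁻¹)
          = (γ + max M 1 * (b + ε) - γ) * (b + ε)⁻¹ := by
        rw [← haz]
        simp only [zero_mul, zero_add, intervalIntegral.integral_const, smul_eq_mul]
      rw [h2]
      have h3 : (γ + max M 1 * (b + ε) - γ) * (b + ε)⁻¹ = max M 1 := by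
        field_simp
        ring
      rw [h3]; exact hMM'
    · -- a > 0
      have hC : 0 < a * γ + (b + ε) := lt_of_lt_of_le hc₀ hβγ
      have hane : a ≠ 0 := ne_of_gt hapos
      refine ⟨(Real.exp (a * max M 1) * (a * γ + (b + ε)) - (b + ε)) / a, ?_⟩
      set y := (Real.exp (a * max M 1) * (a * γ + (b + ε)) - (b + ε)) / a with hydef
      have hay : a * y + (b + ε) = Real.exp (a * max M 1) * (a * γ + (b + ε)) := by
        rw [hydef]; field_simp; ring
      have h1exp : (1:ℝ) ≤ Real.exp (a * max M 1) :=
        Real.one_le_exp (by positivity)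
      have hy : γ ≤ y := by
        have h2 : a * γ + (b + ε) ≤ a * y + (b + ε) := by rw [hay]; nlinarith
        have h3 : a * γ ≤ a * y := by linarith
        exact le_of_mul_le_mul_left h3 hapos
      have hlog : ∀ x ∈ uIcc γ y,
          HasDerivAt (fun x => a⁻¹ * Real.log (a * x + (b + ε)))
            ((a * x + (b + ε))⁻¹) x := by
        intro x hx
        rw [uIcc_of_le hy] at hx
        have hx1 : 0 < a * x + (b + ε) := haff_pos x hx.1
        have hlin : HasDerivAt (fun x : ℝ => a * x + (b + ε)) a x := by
          simpa using ((hasDerivAt_id x).const_mul a).add_const (b + ε)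
        have h4 := (Real.hasDerivAt_log (ne_of_gt hx1)).comp x hlin
        have h5 := h4.const_mul a⁻¹
        rw [show (a * x + (b + ε))⁻¹ = a⁻¹ * ((a * x + (b + ε))⁻¹ * a) by
          rw [mul_comm _ a, ← mul_assoc, inv_mul_cancel₀ hane, one_mul]]
        exact h5
      have hcalc : (∫ x in γ..y, (a * x + (b + ε))⁻¹)
          = a⁻¹ * Real.log (a * y + (b + ε)) - a⁻¹ * Real.log (a * γ + (b + ε)) :=
        intervalIntegral.integral_eq_sub_of_hasDerivAt hlog (haffint y hy)
      refine le_trans ?_ (hcomp y hy)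
      rw [hcalc, hay, Real.log_mul (Real.exp_ne_zero _) (ne_of_gt hC), Real.log_exp]
      have heq : a⁻¹ * (a * max M 1 + Real.log (a * γ + (b + ε)))
          - a⁻¹ * Real.log (a * γ + (b + ε)) = max M 1 := by
        field_simp
        ring
      rw [heq]; exact hMM'
  have hFtop : Tendsto F atTop atTop :=
    tendsto_atTop_atTop_of_monotone hFsm.monotone hunbdd
  have hFsurj : Function.Surjective F := hFc.surjective hFtop hFbot
  let e : ℝ ≃o ℝ := StrictMono.orderIsoOfSurjective F hFsm hFsurj
  have hes : ∀ y, e.symm (F y) = y := fun y =>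
    StrictMono.orderIsoOfSurjective_symm_apply_self F hFsm hFsurj y
  have heF : ∀ z, F (e.symm z) = z := fun z =>
    StrictMono.orderIsoOfSurjective_self_symm_apply F hFsm hFsurj z
  have hesc : Continuous (⇑e.symm) := OrderIso.continuous e.symm
  set u : ℝ → ℝ := fun t => e.symm (1 - t) with hudef
  have huc : Continuous u := hesc.comp (continuous_const.sub continuous_id)
  have hFu : ∀ t, F (u t) = 1 - t := fun t => heF _
  have huγ : ∀ t, t ≤ 1 → γ ≤ u t := by
    intro t ht
    have h1 : e.symm (F γ) ≤ e.symm (1 - t) := e.symm.monotone (by rw [hF0]; linarith)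
    rw [hes γ] at h1
    exact h1
  have hu1 : u 1 = γ := by
    show e.symm (1 - 1) = γ
    rw [sub_self, ← hF0, hes]
  -- derivative of the inverse
  have hsymm_d : ∀ z, HasDerivAt (⇑e.symm) ((ρ (e.symm z))⁻¹) z := by
    intro z
    refine HasDerivAt.of_local_left_inverse hesc.continuousAt (hFd (e.symm z))
      (ne_of_gt (hρpos _)) ?_
    exact Eventually.of_forall fun y => heF y
  have hud : ∀ t, HasDerivAt u (-((ρ (u t))⁻¹)) t := by
    intro t
    have h1 := (hsymm_d (1 - t)).comp t ((hasDerivAt_id t).const_sub 1)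
    simpa [hudef, Function.comp_def, mul_comm] using h1
  -- the integral identity
  have hgc : Continuous fun s => ψ (u s) := hψc.comp huc
  have hprim : ∀ t, HasDerivAt (fun x => ∫ s in (0:ℝ)..x, ψ (u s)) (ψ (u t)) t :=
    fun t => (hgc.integral_hasStrictDerivAt 0 t).hasDerivAt
  have hprimc : Continuous fun x => ∫ s in (0:ℝ)..x, ψ (u s) :=
    Differentiable.continuous fun x => (hprim x).differentiableAt
  set N : ℝ → ℝ := fun x =>
    u x - γ - (∫ s in (0:ℝ)..1, ψ (u s)) + ∫ s in (0:ℝ)..x, ψ (u s) with hNdef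
  have hNc : Continuous N :=
    ((huc.sub continuous_const).sub continuous_const).add hprimc
  have hNd : ∀ x ∈ Icc (0:ℝ) 1, HasDerivAt N 0 x := by
    intro x hx
    have h1 : HasDerivAt N (-((ρ (u x))⁻¹) + ψ (u x)) x :=
      (((hud x).sub_const γ).sub_const _).add (hprim x)
    have h2 : ρ (u x) = (ψ (u x))⁻¹ := hρ_eq _ (huγ x hx.2)
    have h3 : -((ρ (u x))⁻¹) + ψ (u x) = 0 := by rw [h2, inv_inv]; ring
    rwa [h3] at h1
  have hNconst : ∀ x ∈ Icc (0:ℝ) 1, N x = N 0 :=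
    constant_of_has_deriv_right_zero hNc.continuousOn
      (fun x hx => (hNd x (Ico_subset_Icc_self hx)).hasDerivWithinAt)
  have hN1 : N 1 = 0 := by
    rw [hNdef]
    simp only [hu1]
    ring
  have hNzero : ∀ x ∈ Icc (0:ℝ) 1, N x = 0 := fun x hx => by
    rw [hNconst x hx, ← hNconst 1 (by norm_num), hN1]
  have hueq : ∀ t ∈ Icc (0:ℝ) 1, u t = γ + ∫ s in Set.Ioc t 1, (φ (u s) + ε) := by
    intro t ht
    have h0 := hNzero t ht
    rw [hNdef] at h0
    simp only at h0
    have hadd : (∫ s in (0:ℝ)..t, ψ (u s)) + (∫ s in t..1, ψ (u s))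
        = ∫ s in (0:ℝ)..1, ψ (u s) :=
      intervalIntegral.integral_add_adjacent_intervals
        (hgc.intervalIntegrable _ _) (hgc.intervalIntegrable _ _)
    have h1 : u t = γ + ∫ s in t..1, ψ (u s) := by linarith
    have h2 : (∫ s in Set.Ioc t 1, (φ (u s) + ε)) = ∫ s in t..1, ψ (u s) := by
      rw [intervalIntegral.integral_of_le ht.2]
      refine setIntegral_congr_fun measurableSet_Ioc fun s hs => ?_
      exact (hψeq _ (le_trans hγ (huγ s hs.2))).symm
    rw [h2]; exact h1
  refine ⟨u, ⟨huc.continuousOn, fun t ht => le_trans hγ (huγ t ht.2), hueq⟩, ?_⟩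
  -- uniqueness
  rintro v ⟨hvc, hvnn, hveq⟩
  have hv₁c : Continuous fun x : ℝ => v (max (min x 1) 0) :=
    hvc.comp_continuous ((continuous_id.min continuous_const).max continuous_const)
      fun x => ⟨le_max_right _ _, max_le (min_le_right x 1) zero_le_one⟩
  set v₁ : ℝ → ℝ := fun x => v (max (min x 1) 0) with hv₁def
  have hv₁eq : ∀ x ∈ Icc (0:ℝ) 1, v₁ x = v x := fun x hx => by
    rw [hv₁def]
    simp only
    rw [min_eq_left hx.2, max_eq_left hx.1]
  have hvγ : ∀ x ∈ Icc (0:ℝ) 1, γ ≤ v x := by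
    intro x hx
    have h1 : 0 ≤ ∫ s in Set.Ioc x 1, (φ (v s) + ε) := by
      refine setIntegral_nonneg measurableSet_Ioc fun s hs => ?_
      have h2 : 0 ≤ v s := hvnn s ⟨le_trans hx.1 (le_of_lt hs.1), hs.2⟩
      have h3 := hφnn (v s) h2
      linarith
    have h4 := hveq x hx
    linarith
  have hwc : Continuous fun s => ψ (v₁ s) := hψc.comp hv₁c
  have hveq' : ∀ t ∈ Icc (0:ℝ) 1, v t = γ + ∫ s in t..1, ψ (v₁ s) := by
    intro t ht
    rw [hveq t ht, intervalIntegral.integral_of_le ht.2]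
    congr 1
    refine setIntegral_congr_fun measurableSet_Ioc fun s hs => ?_
    have hs01 : s ∈ Icc (0:ℝ) 1 := ⟨le_trans ht.1 (le_of_lt hs.1), hs.2⟩
    rw [hv₁eq s hs01, hψeq _ (hvnn s hs01)]
  set G : ℝ → ℝ := fun x =>
    γ + ((∫ s in (0:ℝ)..1, ψ (v₁ s)) - ∫ s in (0:ℝ)..x, ψ (v₁ s)) with hGdef
  have hGv : ∀ x ∈ Icc (0:ℝ) 1, G x = v x := by
    intro x hx
    have hadd : (∫ s in (0:ℝ)..x, ψ (v₁ s)) + (∫ s in x..1, ψ (v₁ s))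
        = ∫ s in (0:ℝ)..1, ψ (v₁ s) :=
      intervalIntegral.integral_add_adjacent_intervals
        (hwc.intervalIntegrable _ _) (hwc.intervalIntegrable _ _)
    rw [hGdef]
    simp only
    rw [hveq' x hx]
    linarith
  have hGd : ∀ x, HasDerivAt G (-(ψ (v₁ x))) x := by
    intro x
    have h1 := (hwc.integral_hasStrictDerivAt 0 x).hasDerivAt
    have h2 := ((hasDerivAt_const x (∫ s in (0:ℝ)..1, ψ (v₁ s))).sub h1).const_add γ
    simpa [hGdef] using h2
  have hGc : Continuous G :=
    Differentiable.continuous fun x => (hGd x).differentiableAt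
  have hDd : ∀ x ∈ Icc (0:ℝ) 1, HasDerivAt (fun x => F (G x) + x) 0 x := by
    intro x hx
    have h1 := ((hFd (G x)).comp x (hGd x)).add (hasDerivAt_id x)
    have hGx : G x = v x := hGv x hx
    have hγv : γ ≤ v x := hvγ x hx
    have h2 : ρ (G x) = (ψ (v x))⁻¹ := by rw [hGx, hρ_eq _ hγv]
    have h3 : ψ (v₁ x) = ψ (v x) := by rw [hv₁eq x hx]
    have h5 : ψ (v x) ≠ 0 := ne_of_gt (hψpos _ hγv)
    have h4 : ρ (G x) * -(ψ (v₁ x)) + 1 = 0 := by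
      rw [h2, h3]
      field_simp
      ring
    rwa [h4] at h1
  have hDconst := constant_of_has_deriv_right_zero (f := fun x => F (G x) + x)
      (a := 0) (b := 1) ((hFc.comp hGc).add continuous_id).continuousOn
      (fun x hx => (hDd x (Ico_subset_Icc_self hx)).hasDerivWithinAt)
  have hv1γ : v 1 = γ := by
    have h1 := hveq 1 (by norm_num)
    simpa [Set.Ioc_self] using h1
  intro x hx
  have h6 : F (G x) + x = F (G 0) + 0 := hDconst x hx
  have h7 : F (G 1) + 1 = F (G 0) + 0 := hDconst 1 (by norm_num)
  rw [hGv x hx] at h6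
  rw [hGv 1 (by norm_num), hv1γ, hF0] at h7
  have h8 : F (v x) = 1 - x := by linarith
  show v x = u x
  rw [hudef]
  simp only
  rw [← h8, hes]


open Filter in
private lemma caseA_unique (φ : ℝ → ℝ)
    (hφc : ContinuousOn φ (Set.Ici 0)) (hφm : MonotoneOn φ (Set.Ici 0))
    (hφnn : ∀ x ≥ (0:ℝ), 0 ≤ φ x) (hφpos : ∀ x > (0:ℝ), 0 < φ x)
    (hφOsg : OsgoodCondition φ)
    (v : ℝ → ℝ) (hv : IsSolODE φ 0 0 v) :
    ∀ t ∈ Set.Icc (0:ℝ) 1, v t = 0 := by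
  obtain ⟨hvc, hvnn, hveq⟩ := hv
  by_contra hcon
  push_neg at hcon
  obtain ⟨t₀, ht₀, hvt₀⟩ := hcon
  have hvt₀pos : 0 < v t₀ := lt_of_le_of_ne (hvnn t₀ ht₀) (Ne.symm hvt₀)
  -- continuous extension and continuous integrand
  have hv₁c : Continuous fun x : ℝ => v (max (min x 1) 0) :=
    hvc.comp_continuous ((continuous_id.min continuous_const).max continuous_const)
      fun x => ⟨le_max_right _ _, max_le (min_le_right x 1) zero_le_one⟩
  set v₁ : ℝ → ℝ := fun x => v (max (min x 1) 0) with hv₁def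
  have hv₁eq : ∀ x ∈ Icc (0:ℝ) 1, v₁ x = v x := fun x hx => by
    rw [hv₁def]
    simp only
    rw [min_eq_left hx.2, max_eq_left hx.1]
  set w : ℝ → ℝ := fun x => φ (max (v₁ x) 0) with hwdef
  have hwc : Continuous w :=
    hφc.comp_continuous (hv₁c.max continuous_const) fun x => mem_Ici.2 (le_max_right _ _)
  have hwnn : ∀ x, 0 ≤ w x := fun x => hφnn _ (le_max_right _ _)
  have hweq : ∀ x ∈ Icc (0:ℝ) 1, w x = φ (v x) := by
    intro x hx
    rw [hwdef]
    simp only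
    rw [hv₁eq x hx, max_eq_left (hvnn x hx)]
  have hveq' : ∀ t ∈ Icc (0:ℝ) 1, v t = ∫ s in t..1, w s := by
    intro t ht
    rw [hveq t ht, intervalIntegral.integral_of_le ht.2]
    have h1 : (∫ s in Set.Ioc t 1, (φ (v s) + 0)) = ∫ s in Set.Ioc t 1, w s := by
      refine setIntegral_congr_fun measurableSet_Ioc fun s hs => ?_
      rw [hweq s ⟨le_trans ht.1 (le_of_lt hs.1), hs.2⟩]; ring
    rw [h1]; ring
  set G : ℝ → ℝ := fun x =>
    (∫ s in (0:ℝ)..1, w s) - ∫ s in (0:ℝ)..x, w s with hGdef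
  have hGd : ∀ x, HasDerivAt G (-(w x)) x := by
    intro x
    have h1 := (hwc.integral_hasStrictDerivAt 0 x).hasDerivAt
    have h2 := (hasDerivAt_const x (∫ s in (0:ℝ)..1, w s)).sub h1
    rw [zero_sub] at h2; exact h2
  have hGc : Continuous G :=
    Differentiable.continuous fun x => (hGd x).differentiableAt
  have hGanti : Antitone G := by
    refine antitone_of_deriv_nonpos (fun x => (hGd x).differentiableAt) fun x => ?_
    rw [(hGd x).deriv]
    exact neg_nonpos.2 (hwnn x)
  have hGv : ∀ x ∈ Icc (0:ℝ) 1, G x = v x := by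
    intro x hx
    have hadd : (∫ s in (0:ℝ)..x, w s) + (∫ s in x..1, w s) = ∫ s in (0:ℝ)..1, w s :=
      intervalIntegral.integral_add_adjacent_intervals
        (hwc.intervalIntegrable _ _) (hwc.intervalIntegrable _ _)
    rw [hGdef]
    simp only
    rw [hveq' x hx]
    linarith
  have hv1 : v 1 = 0 := by
    have h1 := hveq 1 (by norm_num)
    simpa [Set.Ioc_self] using h1
  have hG1 : G 1 = 0 := by rw [hGv 1 (by norm_num), hv1]
  -- the first zero of G after t₀
  set Z : Set ℝ := Icc t₀ 1 ∩ G ⁻¹' {0} with hZdef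
  have hZ1 : (1:ℝ) ∈ Z := ⟨⟨ht₀.2, le_rfl⟩, by simpa using hG1⟩
  have hZclosed : IsClosed Z :=
    isClosed_Icc.inter (isClosed_singleton.preimage hGc)
  have hZbdd : BddBelow Z := ⟨t₀, fun z hz => hz.1.1⟩
  set t₁ := sInf Z with ht₁def
  have ht₁mem : t₁ ∈ Z := hZclosed.csInf_mem ⟨1, hZ1⟩ hZbdd
  have hGt₁ : G t₁ = 0 := ht₁mem.2
  have ht₁Icc : t₁ ∈ Icc t₀ 1 := ht₁mem.1
  have hGt₀ : G t₀ = v t₀ := hGv t₀ ht₀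
  have ht₀t₁ : t₀ < t₁ := by
    rcases lt_or_eq_of_le ht₁Icc.1 with h | h
    · exact h
    · exfalso
      rw [← h, hGt₀] at hGt₁
      linarith
  have hGpos : ∀ τ, τ ∈ Ico t₀ t₁ → 0 < G τ := by
    intro τ hτ
    have h1 : 0 ≤ G τ := hGt₁ ▸ hGanti (le_of_lt hτ.2)
    rcases eq_or_lt_of_le h1 with h | h
    · exfalso
      have h2 : τ ∈ Z := ⟨⟨hτ.1, le_trans (le_of_lt hτ.2) ht₁Icc.2⟩, by simp [← h]⟩
      have h3 := csInf_le hZbdd h2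
      rw [← ht₁def] at h3
      linarith [hτ.2]
    · exact h
  have hcpos : 0 < G t₀ := by rw [hGt₀]; exact hvt₀pos
  -- the key Osgood-type bound
  have key : ∀ τ ∈ Ico t₀ t₁,
      (∫⁻ x in Set.Ioc (G τ) (G t₀), ENNReal.ofReal (1 / φ x)) ≤ ENNReal.ofReal 1 := by
    intro τ hτ
    have hm : 0 < G τ := hGpos τ hτ
    have hmc : G τ ≤ G t₀ := hGanti hτ.1
    set m := G τ with hmdef
    set q : ℝ → ℝ := fun x => (φ (max x m))⁻¹ with hqdef
    have hmax_cont : Continuous fun x : ℝ => φ (max x m) :=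
      hφc.comp_continuous (continuous_id.max continuous_const)
        fun x => le_trans (le_of_lt hm) (le_max_right x m)
    have hφmaxpos : ∀ x, 0 < φ (max x m) := fun x =>
      lt_of_lt_of_le (hφpos m hm)
        (hφm (mem_Ici.2 (le_of_lt hm))
          (mem_Ici.2 (le_trans (le_of_lt hm) (le_max_right x m))) (le_max_right x m))
    have hqc : Continuous q := hmax_cont.inv₀ fun x => ne_of_gt (hφmaxpos x)
    have hqnn : ∀ x, 0 ≤ q x := fun x => le_of_lt (inv_pos.2 (hφmaxpos x))
    have hqd : ∀ y, HasDerivAt (fun y => ∫ x in m..y, q x) (q y) y := fun y =>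
      (hqc.integral_hasStrictDerivAt m y).hasDerivAt
    have hhd : ∀ x ∈ Icc t₀ τ,
        HasDerivAt (fun x => (∫ z in m..(G x), q z) + x) 0 x := by
      intro x hx
      have h1 := ((hqd (G x)).comp x (hGd x)).add (hasDerivAt_id x)
      have hx01 : x ∈ Icc (0:ℝ) 1 :=
        ⟨le_trans ht₀.1 hx.1, le_trans hx.2 (le_trans (le_of_lt hτ.2) ht₁Icc.2)⟩
      have hGxm : m ≤ G x := hGanti hx.2
      have hGxpos : 0 < G x := lt_of_lt_of_le hm hGxm
      have hq_eval : q (G x) = (φ (G x))⁻¹ := by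
        rw [hqdef]; simp only; rw [max_eq_left hGxm]
      have hw_eval : w x = φ (G x) := by
        rw [hweq x hx01, hGv x hx01]
      have hφGx : φ (G x) ≠ 0 := ne_of_gt (hφpos _ hGxpos)
      have h2 : q (G x) * -(w x) + 1 = 0 := by
        rw [hq_eval, hw_eval]
        field_simp
        ring
      rwa [h2] at h1
    have hQc : Continuous fun x => ∫ z in m..x, q z :=
      Differentiable.continuous fun x => (hqd x).differentiableAt
    have hconst := constant_of_has_deriv_right_zero (a := t₀) (b := τ)
      (f := fun x => (∫ z in m..(G x), q z) + x)
      ((hQc.comp hGc).add continuous_id).continuousOn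
      (fun x hx => (hhd x (Ico_subset_Icc_self hx)).hasDerivWithinAt)
    have happ : (∫ z in m..(G τ), q z) + τ = (∫ z in m..(G t₀), q z) + t₀ :=
      hconst τ (right_mem_Icc.2 hτ.1)
    rw [← hmdef, intervalIntegral.integral_same] at happ
    have hQval : (∫ z in m..(G t₀), q z) = τ - t₀ := by linarith
    have hτ1 : τ - t₀ ≤ 1 := by
      have := hτ.2; have := ht₁Icc.2; have := ht₀.1; linarith
    have hcongr : (∫⁻ x in Set.Ioc m (G t₀), ENNReal.ofReal (1 / φ x))
        = ∫⁻ x in Set.Ioc m (G t₀), ENNReal.ofReal (q x) := by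
      refine setLIntegral_congr_fun measurableSet_Ioc (fun x hx => ?_)
      rw [hqdef]
      simp only
      rw [max_eq_left (le_of_lt hx.1), one_div]
    have hint : IntegrableOn q (Set.Ioc m (G t₀)) volume := hqc.integrableOn_Ioc
    have hlint : (∫⁻ x in Set.Ioc m (G t₀), ENNReal.ofReal (q x))
        = ENNReal.ofReal (∫ x in Set.Ioc m (G t₀), q x) :=
      (ofReal_integral_eq_lintegral_ofReal hint (ae_of_all _ hqnn)).symm
    have hset : (∫ x in Set.Ioc m (G t₀), q x) = ∫ x in m..(G t₀), q x :=
      (intervalIntegral.integral_of_le hmc).symm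
    rw [hcongr, hlint, hset, hQval]
    exact ENNReal.ofReal_le_ofReal hτ1
  -- a sequence approaching t₁ from the left
  set τs : ℕ → ℝ := fun n => t₁ - (t₁ - t₀) / (n + 1) with hτsdef
  have hτsmem : ∀ n, τs n ∈ Ico t₀ t₁ := by
    intro n
    constructor
    · rw [hτsdef]
      simp only
      have h1 : (t₁ - t₀) / ((n:ℝ) + 1) ≤ t₁ - t₀ :=
        div_le_self (by linarith) (le_add_of_nonneg_left (Nat.cast_nonneg n))
      linarith
    · rw [hτsdef]
      simp only
      have h2 : 0 < (t₁ - t₀) / ((n:ℝ) + 1) := div_pos (by linarith) (by positivity)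
      linarith
  set ms : ℕ → ℝ := fun n => G (τs n) with hmsdef
  have hms_pos : ∀ n, 0 < ms n := fun n => hGpos _ (hτsmem n)
  have hms_anti : Antitone ms := by
    intro n n' h
    refine hGanti ?_
    rw [hτsdef]
    simp only
    have h1 : (t₁ - t₀) / ((n':ℝ) + 1) ≤ (t₁ - t₀) / ((n:ℝ) + 1) := by
      apply div_le_div_of_nonneg_left (by linarith) (by positivity)
      have hc : (n:ℝ) ≤ (n':ℝ) := Nat.cast_le.2 h
      linarith
    linarith
  have hms_tendsto : Tendsto ms atTop (nhds 0) := by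
    have h2 : Tendsto (fun n : ℕ => (t₁ - t₀) / ((n:ℝ) + 1)) atTop (nhds 0) :=
      Tendsto.div_atTop tendsto_const_nhds
        (tendsto_atTop_add_const_right _ 1 tendsto_natCast_atTop_atTop)
    have h1 : Tendsto τs atTop (nhds t₁) := by
      rw [hτsdef]
      simpa using tendsto_const_nhds.sub h2
    have h3 := (hGc.continuousAt (x := t₁)).tendsto.comp h1
    rw [hGt₁] at h3
    exact h3
  -- Osgood contradiction
  have hOsg := hφOsg (G t₀) hcpos
  set H : ℝ → ENNReal := fun x => ENNReal.ofReal (1 / φ (max x 0)) with hHdef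
  have hHmeas : Measurable H := by
    have h1 : Continuous fun x : ℝ => φ (max x 0) :=
      hφc.comp_continuous (continuous_id.max continuous_const) fun x => le_max_right x 0
    exact (measurable_const.div h1.measurable).ennreal_ofReal
  have hOsg' : (∫⁻ x in Set.Ioc (0:ℝ) (G t₀), H x) = ⊤ := by
    rw [← hOsg]
    refine setLIntegral_congr_fun measurableSet_Ioc (fun x hx => ?_)
    rw [hHdef]
    simp only
    rw [max_eq_left (le_of_lt hx.1)]
  have hbound : ∀ n, (∫⁻ x in Set.Ioc (ms n) (G t₀), H x) ≤ ENNReal.ofReal 1 := by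
    intro n
    have h1 : (∫⁻ x in Set.Ioc (ms n) (G t₀), H x)
        = ∫⁻ x in Set.Ioc (ms n) (G t₀), ENNReal.ofReal (1 / φ x) := by
      refine setLIntegral_congr_fun measurableSet_Ioc (fun x hx => ?_)
      rw [hHdef]
      simp only
      rw [max_eq_left (le_of_lt (lt_trans (hms_pos n) hx.1))]
    rw [h1]
    exact key (τs n) (hτsmem n)
  set fseq : ℕ → ℝ → ENNReal := fun n => (Set.Ioc (ms n) (G t₀)).indicator H with hfdef
  have hfmeas : ∀ n, Measurable (fseq n) := fun n => hHmeas.indicator measurableSet_Ioc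
  have hfmono : Monotone fseq := by
    intro n n' h
    exact Set.indicator_le_indicator_of_subset
      (Ioc_subset_Ioc_left (hms_anti h)) (fun x => zero_le) 
  have hsup : ((Set.Ioc (0:ℝ) (G t₀)).indicator H) = fun x => ⨆ n, fseq n x := by
    funext x
    by_cases hx : x ∈ Set.Ioc (0:ℝ) (G t₀)
    · rw [Set.indicator_of_mem hx]
      refine le_antisymm ?_ (iSup_le fun n => ?_)
      · obtain ⟨n, hn⟩ := (hms_tendsto.eventually_lt_const hx.1).exists
        refine le_iSup_of_le n ?_
        rw [hfdef]
        simp only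
        have hmem : x ∈ Set.Ioc (ms n) (G t₀) := ⟨hn, hx.2⟩
        rw [Set.indicator_of_mem hmem]
      · rw [hfdef]
        exact Set.indicator_le_self _ _ x
    · rw [Set.indicator_of_notMem hx]
      refine (le_antisymm (iSup_le fun n => ?_) zero_le).symm
      rw [hfdef]
      simp only
      have hnot : x ∉ Set.Ioc (ms n) (G t₀) := fun hmem =>
        hx (Set.mem_Ioc.2 ⟨lt_trans (hms_pos n) (Set.mem_Ioc.1 hmem).1, (Set.mem_Ioc.1 hmem).2⟩)
      rw [Set.indicator_of_notMem hnot]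
  have hfin : (∫⁻ x in Set.Ioc (0:ℝ) (G t₀), H x) ≤ ENNReal.ofReal 1 := by
    rw [← lintegral_indicator measurableSet_Ioc]
    calc (∫⁻ x, (Set.Ioc (0:ℝ) (G t₀)).indicator H x)
        = ∫⁻ x, ⨆ n, fseq n x := by rw [hsup]
      _ = ⨆ n, ∫⁻ x, fseq n x := lintegral_iSup hfmeas hfmono
      _ ≤ ENNReal.ofReal 1 := by
          refine iSup_le fun n => ?_
          rw [hfdef]
          simp only
          rw [lintegral_indicator measurableSet_Ioc]
          exact hbound n
  rw [hOsg'] at hfin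
  exact ENNReal.ofReal_ne_top (top_le_iff.1 hfin)


/-- existence and uniqueness of the solution of the backward
differential equation `u t = γ + ∫ₜ¹ (φ (u s) + ε) ds` on `[0,1]`, for a continuous
non-decreasing `φ : [0,∞) → [0,∞)`, positive on `(0,∞)`, of at most linear growth,
satisfying the Osgood condition. -/
theorem stmt0 (φ : ℝ → ℝ) (a b : ℝ) (ha : 0 ≤ a) (hb : 0 ≤ b)
    (hφc : ContinuousOn φ (Set.Ici 0)) (hφm : MonotoneOn φ (Set.Ici 0))
    (hφnn : ∀ x ≥ (0:ℝ), 0 ≤ φ x) (hφpos : ∀ x > (0:ℝ), 0 < φ x)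
    (hφgrow : ∀ x ≥ (0:ℝ), φ x ≤ a * x + b) (hφOsg : OsgoodCondition φ)
    (γ ε : ℝ) (hγ : 0 ≤ γ) (hε : 0 ≤ ε) :
    ∃ u : ℝ → ℝ, IsSolODE φ ε γ u ∧
      ∀ v : ℝ → ℝ, IsSolODE φ ε γ v → Set.EqOn v u (Set.Icc 0 1) := by
  by_cases hz : γ = 0 ∧ ε = 0
  · obtain ⟨rfl, rfl⟩ := hz
    have hφ0 : φ 0 = 0 := by
      by_contra h
      have hφ0pos : 0 < φ 0 := lt_of_le_of_ne (hφnn 0 le_rfl) (Ne.symm h)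
      have h1 := hφOsg 1 one_pos
      have h2 : (∫⁻ x in Set.Ioc (0:ℝ) 1, ENNReal.ofReal (1 / φ x))
          ≤ ∫⁻ _x in Set.Ioc (0:ℝ) 1, ENNReal.ofReal (1 / φ 0) := by
        refine setLIntegral_mono measurable_const fun x hx => ?_
        refine ENNReal.ofReal_le_ofReal ?_
        have h3 : φ 0 ≤ φ x :=
          hφm (mem_Ici.2 le_rfl) (mem_Ici.2 (le_of_lt hx.1)) (le_of_lt hx.1)
        exact one_div_le_one_div_of_le hφ0pos h3
      rw [h1] at h2
      have h3 : (∫⁻ _x in Set.Ioc (0:ℝ) 1, ENNReal.ofReal (1 / φ 0)) < ⊤ := by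
        rw [setLIntegral_const]
        refine ENNReal.mul_lt_top ENNReal.ofReal_lt_top ?_
        rw [Real.volume_Ioc]
        exact ENNReal.ofReal_lt_top
      exact absurd (top_le_iff.1 h2) (ne_of_lt h3)
    refine ⟨fun _ => 0, ⟨continuousOn_const, fun t _ => le_rfl, ?_⟩, ?_⟩
    · intro t ht
      simp [hφ0]
    · intro v hv x hx
      have := caseA_unique φ hφc hφm hφnn hφpos hφOsg v hv x hx
      simpa using this
  · have hc₀ : 0 < φ γ + ε := by
      rcases not_and_or.1 hz with h | h
      · have hγpos : 0 < γ := lt_of_le_of_ne hγ (Ne.symm h)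
        have := hφpos γ hγpos
        linarith
      · have hεpos : 0 < ε := lt_of_le_of_ne hε (Ne.symm h)
        have := hφnn γ hγ
        linarith
    exact caseB φ a b ha hφc hφm hφnn hφgrow γ ε hγ hε hc₀
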